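/- The repair strategy outputs a solution satisfying all pairwise constraints: given a parent p that is an independent set in G and an offspring o, after processing every newly-added bit i (o_i = 1, p_i = 0) by retaining one uniformly random element of Q = {j : (v_i, v_j) ∈ E, o_j = 1} ∪ {i} and zeroing the rest, the returned solution contains no edge of E. -/

import Mathlib

private lemma step_mono {n : ℕ} (Adj : Fin n → Fin n → Prop) [DecidableRel Adj]
    (p : Fin n → Bool) (c : (Fin n → Bool) → Fin n → Fin n)
    (k : Fin n) (s : Fin n → Bool) (x : Fin n)
    (h : (if s k = true ∧ p k = false then
          (fun j => if ((Adj k j ∧ s j = true) ∨ j = k) ∧ j ≠ c s k then false else s j)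
        else s) x = true) : s x = true := by
  by_cases hk : s k = true ∧ p k = false
  · simp only [if_pos hk] at h
    by_cases hcond : ((Adj k x ∧ s x = true) ∨ x = k) ∧ x ≠ c s k
    · simp [hcond] at h
    · simpa [hcond] using h
  · simpa [if_neg hk] using h

private lemma step_inv {n : ℕ} (Adj : Fin n → Fin n → Prop) [DecidableRel Adj]
    (hsymm : Symmetric Adj) (hirr : Irreflexive Adj)
    (p : Fin n → Bool) (c : (Fin n → Bool) → Fin n → Fin n)
    (T : Fin n → Prop) (k : Fin n) (s : Fin n → Bool)
    (hInv : ∀ i j, Adj i j → s i = true → s j = true →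
      (T i ∨ p i = true) → (T j ∨ p j = true) → False) :
    ∀ i j, Adj i j →
      (if s k = true ∧ p k = false then
          (fun j => if ((Adj k j ∧ s j = true) ∨ j = k) ∧ j ≠ c s k then false else s j)
        else s) i = true →
      (if s k = true ∧ p k = false then
          (fun j => if ((Adj k j ∧ s j = true) ∨ j = k) ∧ j ≠ c s k then false else s j)
        else s) j = true →
      ((T i ∨ i = k) ∨ p i = true) → ((T j ∨ j = k) ∨ p j = true) → False := by
  intro i j hadj hi' hj' hwi hwj
  have hsi := step_mono Adj p c k s i hi'
  have hsj := step_mono Adj p c k s j hj'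
  by_cases hk : s k = true ∧ p k = false
  · simp only [if_pos hk] at hi' hj'
    by_cases hik : i = k
    · subst hik
      -- i survived, so c s i = i
      have hci : c s i = i := by
        by_contra hne
        have : ((Adj i i ∧ s i = true) ∨ i = i) ∧ i ≠ c s i :=
          ⟨Or.inr rfl, fun h => hne h.symm⟩
        simp [this] at hi'
      -- then j gets zeroed
      have hjne : j ≠ i := fun h => hirr i (h ▸ hadj)
      have : ((Adj i j ∧ s j = true) ∨ j = i) ∧ j ≠ c s i :=
        ⟨Or.inl ⟨hadj, hsj⟩, by rw [hci]; exact hjne⟩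
      simp [this] at hj'
    · by_cases hjk : j = k
      · subst hjk
        have hcj : c s j = j := by
          by_contra hne
          have : ((Adj j j ∧ s j = true) ∨ j = j) ∧ j ≠ c s j :=
            ⟨Or.inr rfl, fun h => hne h.symm⟩
          simp [this] at hj'
        have hine : i ≠ j := by intro h; subst h; exact hirr _ hadj
        have : ((Adj j i ∧ s i = true) ∨ i = j) ∧ i ≠ c s j :=
          ⟨Or.inl ⟨hsymm hadj, hsi⟩, by rw [hcj]; exact hine⟩
        simp [this] at hi'
      · exact hInv i j hadj hsi hsj
          (hwi.elim (fun h => h.elim Or.inl (fun h => absurd h hik)) Or.inr)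
          (hwj.elim (fun h => h.elim Or.inl (fun h => absurd h hjk)) Or.inr)
  · -- no change; moreover s k = false or p k = true
    have hk' : s k = false ∨ p k = true := by
      rcases Bool.eq_false_or_eq_true (s k) with h | h
      · rcases Bool.eq_false_or_eq_true (p k) with h2 | h2
        · exact Or.inr h2
        · exact absurd ⟨h, h2⟩ hk
      · exact Or.inl h
    have wi : T i ∨ p i = true := by
      rcases hwi with (h | h) | h
      · exact Or.inl h
      · subst h
        rcases hk' with h2 | h2
        · rw [h2] at hsi; exact absurd hsi (by simp)
        · exact Or.inr h2
      · exact Or.inr h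
    have wj : T j ∨ p j = true := by
      rcases hwj with (h | h) | h
      · exact Or.inl h
      · subst h
        rcases hk' with h2 | h2
        · rw [h2] at hsj; exact absurd hsj (by simp)
        · exact Or.inr h2
      · exact Or.inr h
    exact hInv i j hadj hsi hsj wi wj

private lemma repair_aux {n : ℕ} (Adj : Fin n → Fin n → Prop) [DecidableRel Adj]
    (hsymm : Symmetric Adj) (hirr : Irreflexive Adj)
    (p : Fin n → Bool) (c : (Fin n → Bool) → Fin n → Fin n) :
    ∀ (L : List (Fin n)) (T : Fin n → Prop) (s : Fin n → Bool),
    (∀ i j, Adj i j → s i = true → s j = true →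
      (T i ∨ p i = true) → (T j ∨ p j = true) → False) →
    ∀ i j, Adj i j →
      (L.foldl (fun s i =>
        if s i = true ∧ p i = false then
          (fun j => if ((Adj i j ∧ s j = true) ∨ j = i) ∧ j ≠ c s i then false else s j)
        else s) s) i = true →
      (L.foldl (fun s i =>
        if s i = true ∧ p i = false then
          (fun j => if ((Adj i j ∧ s j = true) ∨ j = i) ∧ j ≠ c s i then false else s j)
        else s) s) j = true →
      (T i ∨ i ∈ L ∨ p i = true) → (T j ∨ j ∈ L ∨ p j = true) → False := by
  intro L
  induction L with
  | nil =>
    intro T s hInv i j hadj hi hj hwi hwj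
    simp only [List.foldl_nil] at hi hj
    exact hInv i j hadj hi hj
      (hwi.imp id (fun h => h.elim (fun h => absurd h List.not_mem_nil) id))
      (hwj.imp id (fun h => h.elim (fun h => absurd h List.not_mem_nil) id))
  | cons k L ih =>
    intro T s hInv i j hadj hi hj hwi hwj
    simp only [List.foldl_cons] at hi hj
    refine ih (fun x => T x ∨ x = k) _
      (step_inv Adj hsymm hirr p c T k s hInv) i j hadj hi hj ?_ ?_
    · rcases hwi with h | h | h
      · exact Or.inl (Or.inl h)
      · rcases List.mem_cons.mp h with h | h
        · exact Or.inl (Or.inr h)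
        · exact Or.inr (Or.inl h)
      · exact Or.inr (Or.inr h)
    · rcases hwj with h | h | h
      · exact Or.inl (Or.inl h)
      · rcases List.mem_cons.mp h with h | h
        · exact Or.inl (Or.inr h)
        · exact Or.inr (Or.inl h)
      · exact Or.inr (Or.inr h)

/-- the repair strategy outputs a solution satisfying all pairwise
constraints: given a parent `p` that is an independent set of `G` and an offspring `o`,
after scanning bits `i = 1, …, n` in order and, for each newly-added bit
(`o i = true`, `p i = false`), retaining one (arbitrarily/randomly chosen) element
`c s i` of the conflict set `Q = {j : (v_i, v_j) ∈ E, o j = 1} ∪ {i}` and zeroing the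
rest, the returned solution contains no edge of `E`. -/
theorem repair_strategy_feasible {n : ℕ} (Adj : Fin n → Fin n → Prop)
    [DecidableRel Adj] (hsymm : Symmetric Adj) (hirr : Irreflexive Adj)
    (d : ℕ) (hdeg : ∀ i : Fin n, (Finset.univ.filter (fun j => Adj i j)).card ≤ d)
    (p o : Fin n → Bool)
    (hparent : ∀ i j, Adj i j → ¬ (p i = true ∧ p j = true))
    -- the (random) choice of the retained element: always an element of the conflict set
    (c : (Fin n → Bool) → Fin n → Fin n)
    (hc : ∀ s i, c s i = i ∨ (Adj i (c s i) ∧ s (c s i) = true))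
    (r : Fin n → Bool)
    (hr : r = (List.finRange n).foldl
      (fun s i =>
        if s i = true ∧ p i = false then
          (fun j => if ((Adj i j ∧ s j = true) ∨ j = i) ∧ j ≠ c s i then false else s j)
        else s) o) :
    ∀ i j, Adj i j → ¬ (r i = true ∧ r j = true) := by
  subst hr
  intro i j hadj ⟨hi, hj⟩
  exact repair_aux Adj hsymm hirr p c (List.finRange n) (fun _ => False) o
    (fun i j hadj hi hj hwi hwj =>
      hparent i j hadj ⟨hwi.resolve_left (fun h => h), hwj.resolve_left (fun h => h)⟩)
    i j hadj hi hj (Or.inr (Or.inl (List.mem_finRange i)))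
    (Or.inr (Or.inl (List.mem_finRange j)))
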